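/- On a connected locally finite graph G=(V,E) with μ(x) ≥ μ_min > 0 and Σ_{y∼x}ω_{xy} ≤ C for all x, the finitely supported functions are dense in W^{2,2}(V): for every u with ∫_V(|Δu|² + |∇u|² + u²)dμ < ∞, the cutoffs u·η_k satisfy ∫_V |Δ(u·η_k − u)|² dμ → 0 as k → ∞ (in addition to convergence of the lower-order terms), where η_k is the piecewise-linear radial cutoff at scales k and 2k. -/

import Mathlib

open Filter Topology

structure GraphData (V : Type*) where
  ω : V → V → ℝ
  μ : V → ℝ
  sym : ∀ x y, ω x y = ω y x
  nonneg : ∀ x y, 0 ≤ ω x y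
  loopless : ∀ x, ω x x = 0
  locfin : ∀ x, {y | ω x y ≠ 0}.Finite
  μpos : ∀ x, 0 < μ x

variable {V : Type*}

noncomputable def GraphData.lap (g : GraphData V) (u : V → ℝ) (x : V) : ℝ :=
  (1 / g.μ x) * ∑' y, g.ω x y * (u y - u x)

noncomputable def GraphData.grad (g : GraphData V) (u v : V → ℝ) (x : V) : ℝ :=
  (1 / (2 * g.μ x)) * ∑' y, g.ω x y * (u y - u x) * (v y - v x)

noncomputable def GraphData.integral (g : GraphData V) (f : V → ℝ) : ℝ :=
  ∑' x, g.μ x * f x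

def GraphData.G (g : GraphData V) : SimpleGraph V where
  Adj x y := 0 < g.ω x y
  symm := ⟨fun x y (h : 0 < g.ω x y) => (by rwa [g.sym y x] : 0 < g.ω y x)⟩
  loopless := ⟨fun x (h : 0 < g.ω x x) => by simp [g.loopless x] at h⟩

noncomputable def GraphData.enormSq (g : GraphData V) (a : V → ℝ) (lam : ℝ) (u : V → ℝ) : ℝ :=
  ∑' x, g.μ x * ((g.lap u x) ^ 2 + g.grad u u x + (lam * a x + 1) * (u x) ^ 2)

def GraphData.memE (g : GraphData V) (a : V → ℝ) (lam : ℝ) (u : V → ℝ) : Prop :=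
  Summable fun x => g.μ x * ((g.lap u x) ^ 2 + g.grad u u x + (lam * a x + 1) * (u x) ^ 2)

noncomputable def GraphData.lpInt (g : GraphData V) (p : ℝ) (u : V → ℝ) : ℝ :=
  ∑' x, g.μ x * |u x| ^ p

noncomputable def GraphData.Jlam (g : GraphData V) (a : V → ℝ) (lam p : ℝ) (u : V → ℝ) : ℝ :=
  (1 / 2) * g.enormSq a lam u - (1 / p) * g.lpInt p u

def GraphData.Nehari (g : GraphData V) (a : V → ℝ) (lam p : ℝ) : Set (V → ℝ) :=
  {u | u ≠ 0 ∧ g.memE a lam u ∧ g.enormSq a lam u = g.lpInt p u}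

noncomputable def GraphData.Jderiv (g : GraphData V) (a : V → ℝ) (lam p : ℝ) (u φ : V → ℝ) : ℝ :=
  (∑' x, g.μ x * (g.lap u x * g.lap φ x + g.grad u φ x + (lam * a x + 1) * u x * φ x))
    - ∑' x, g.μ x * (|u x| ^ (p - 2) * u x * φ x)

def GraphData.bdry (g : GraphData V) (Ω : Set V) : Set V :=
  {y | y ∉ Ω ∧ ∃ x ∈ Ω, 0 < g.ω x y}

noncomputable def GraphData.hnormSq (g : GraphData V) (Ω : Set V) (u : V → ℝ) : ℝ :=
  (∑' x : ↥(Ω ∪ g.bdry Ω), g.μ x * ((g.lap u x) ^ 2 + g.grad u u x))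
    + ∑' x : Ω, g.μ x * (u x) ^ 2

noncomputable def GraphData.lpIntO (g : GraphData V) (Ω : Set V) (p : ℝ) (u : V → ℝ) : ℝ :=
  ∑' x : Ω, g.μ x * |u x| ^ p

noncomputable def GraphData.JOmega (g : GraphData V) (Ω : Set V) (p : ℝ) (u : V → ℝ) : ℝ :=
  (1 / 2) * g.hnormSq Ω u - (1 / p) * g.lpIntO Ω p u

def GraphData.memH (g : GraphData V) (Ω : Set V) (u : V → ℝ) : Prop :=
  ∀ x ∉ Ω, u x = 0

def GraphData.NehariO (g : GraphData V) (Ω : Set V) (p : ℝ) : Set (V → ℝ) :=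
  {u | u ≠ 0 ∧ g.memH Ω u ∧ g.hnormSq Ω u = g.lpIntO Ω p u}

noncomputable def GraphData.JderivO (g : GraphData V) (Ω : Set V) (p : ℝ) (u φ : V → ℝ) : ℝ :=
  (∑' x : ↥(Ω ∪ g.bdry Ω), g.μ x * (g.lap u x * g.lap φ x + g.grad u φ x))
    + (∑' x : Ω, g.μ x * (u x * φ x))
    - ∑' x : Ω, g.μ x * (|u x| ^ (p - 2) * u x * φ x)

/-- The piecewise-linear radial cutoff η_k at scales k and 2k around x₀. -/
noncomputable def GraphData.cutoff (g : GraphData V) (x₀ : V) (k : ℕ) (x : V) : ℝ :=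
  if g.G.dist x x₀ ≤ k then 1
  else if g.G.dist x x₀ < 2 * k then ((2 * k : ℝ) - g.G.dist x x₀) / k
  else 0

namespace Stmt17Aux

lemma summable_omega_mul (g : GraphData V) (x : V) (f : V → ℝ) :
    Summable (fun y => g.ω x y * f y) := by
  classical
  apply summable_of_ne_finset_zero (s := (g.locfin x).toFinset)
  intro y hy
  simp only [Set.Finite.mem_toFinset, Set.mem_setOf_eq, not_not] at hy
  rw [hy, zero_mul]

lemma summable_omega (g : GraphData V) (x : V) : Summable (fun y => g.ω x y) := by
  simpa using summable_omega_mul g x (fun _ => 1)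

lemma cs (g : GraphData V) (x : V) (a : V → ℝ) :
    (∑' y, g.ω x y * a y) ^ 2 ≤ (∑' y, g.ω x y) * ∑' y, g.ω x y * (a y) ^ 2 := by
  classical
  set s := (g.locfin x).toFinset with hs
  have h0 : ∀ y ∉ s, g.ω x y = 0 := by
    intro y hy
    simpa [hs, Set.Finite.mem_toFinset] using hy
  rw [tsum_eq_sum (s := s) (fun y hy => by rw [h0 y hy, zero_mul]),
      tsum_eq_sum (s := s) h0,
      tsum_eq_sum (s := s) (fun y hy => by rw [h0 y hy, zero_mul])]
  have key := Finset.sum_mul_sq_le_sq_mul_sq s (fun y => Real.sqrt (g.ω x y))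
      (fun y => Real.sqrt (g.ω x y) * a y)
  have e1 : ∀ y ∈ s, Real.sqrt (g.ω x y) * (Real.sqrt (g.ω x y) * a y) = g.ω x y * a y := by
    intro y _
    rw [← mul_assoc, Real.mul_self_sqrt (g.nonneg x y)]
  have e2 : ∀ y ∈ s, (Real.sqrt (g.ω x y)) ^ 2 = g.ω x y := by
    intro y _; exact Real.sq_sqrt (g.nonneg x y)
  have e3 : ∀ y ∈ s, (Real.sqrt (g.ω x y) * a y) ^ 2 = g.ω x y * (a y) ^ 2 := by
    intro y _; rw [mul_pow, Real.sq_sqrt (g.nonneg x y)]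
  rw [Finset.sum_congr rfl e1, Finset.sum_congr rfl e2, Finset.sum_congr rfl e3] at key
  exact key

lemma cutoff_nonneg (g : GraphData V) (x₀ : V) (k : ℕ) (x : V) : 0 ≤ g.cutoff x₀ k x := by
  unfold GraphData.cutoff
  split_ifs with h1 h2
  · norm_num
  · push_neg at h1
    have hk : 0 < k := by omega
    apply div_nonneg _ (by exact_mod_cast hk.le)
    have : (g.G.dist x x₀ : ℝ) < 2 * k := by exact_mod_cast h2
    linarith
  · exact le_rfl

lemma cutoff_le_one (g : GraphData V) (x₀ : V) (k : ℕ) (x : V) : g.cutoff x₀ k x ≤ 1 := by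
  unfold GraphData.cutoff
  split_ifs with h1 h2
  · exact le_rfl
  · push_neg at h1
    have hk : 0 < k := by omega
    have hk' : (0:ℝ) < k := by exact_mod_cast hk
    rw [div_le_one hk']
    have : (k:ℝ) < g.G.dist x x₀ := by exact_mod_cast h1
    linarith
  · norm_num

lemma cutoff_eq_one (g : GraphData V) (x₀ : V) (k : ℕ) (x : V)
    (h : g.G.dist x x₀ ≤ k) : g.cutoff x₀ k x = 1 := by
  unfold GraphData.cutoff
  rw [if_pos h]

end Stmt17Aux

/-- density of finitely supported functions in W^{2,2}(V) via cutoffs. -/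
theorem stmt17 (g : GraphData V) (μmin C : ℝ) (hμmin : 0 < μmin)
    (hμ : ∀ x, μmin ≤ g.μ x) (hω : ∀ x, ∑' y, g.ω x y ≤ C)
    (hconn : g.G.Connected) (x₀ : V)
    (u : V → ℝ)
    (hu : Summable fun x => g.μ x * ((g.lap u x) ^ 2 + g.grad u u x + (u x) ^ 2)) :
    Filter.Tendsto (fun k : ℕ => ∑' x, g.μ x *
        (g.lap (fun y => u y * g.cutoff x₀ k y - u y) x) ^ 2) Filter.atTop (nhds 0)
    ∧ Filter.Tendsto (fun k : ℕ => ∑' x, g.μ x *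
        ((g.lap (fun y => u y * g.cutoff x₀ k y - u y) x) ^ 2
          + g.grad (fun y => u y * g.cutoff x₀ k y - u y)
              (fun y => u y * g.cutoff x₀ k y - u y) x
          + (u x * g.cutoff x₀ k x - u x) ^ 2)) Filter.atTop (nhds 0) := by
  classical
  open Stmt17Aux in
  set v : ℕ → V → ℝ := fun k y => u y * g.cutoff x₀ k y - u y with hv
  have hC0 : 0 ≤ C := le_trans (tsum_nonneg (g.nonneg x₀)) (hω x₀)
  have hvsq : ∀ k y, (v k y) ^ 2 ≤ (u y) ^ 2 := by
    intro k y
    have h1 := Stmt17Aux.cutoff_nonneg g x₀ k y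
    have h2 := Stmt17Aux.cutoff_le_one g x₀ k y
    have e : v k y = u y * (g.cutoff x₀ k y - 1) := by simp only [hv]; ring
    have ht : (g.cutoff x₀ k y - 1) ^ 2 ≤ 1 := by nlinarith
    rw [e, mul_pow]
    nlinarith [sq_nonneg (u y)]
  -- summability of μ u², u²
  have hgradnn : ∀ (w : V → ℝ) (x : V), 0 ≤ g.grad w w x := by
    intro w x
    unfold GraphData.grad
    apply mul_nonneg
    · have := g.μpos x
      positivity
    · apply tsum_nonneg
      intro y
      have := g.nonneg x y
      nlinarith [sq_nonneg (w y - w x)]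
  have hμu2 : Summable fun x => g.μ x * (u x) ^ 2 := by
    refine hu.of_nonneg_of_le
      (fun x => mul_nonneg (g.μpos x).le (sq_nonneg _)) ?_
    intro x
    have h1 := sq_nonneg (g.lap u x)
    have h2 := hgradnn u x
    have := (g.μpos x).le
    nlinarith
  have hu2 : Summable fun x => (u x) ^ 2 := by
    refine (hμu2.mul_left (1 / μmin)).of_nonneg_of_le (fun x => sq_nonneg _) ?_
    intro x
    have h1 : μmin * (u x) ^ 2 ≤ g.μ x * (u x) ^ 2 :=
      mul_le_mul_of_nonneg_right (hμ x) (sq_nonneg _)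
    calc (u x) ^ 2 = (1 / μmin) * (μmin * (u x) ^ 2) := by field_simp
      _ ≤ (1 / μmin) * (g.μ x * (u x) ^ 2) :=
        mul_le_mul_of_nonneg_left h1 (by positivity)
  -- S and its summability
  set S : V → ℝ := fun x => ∑' y, g.ω x y * (u y) ^ 2 with hSdef
  have hSnn : ∀ x, 0 ≤ S x := fun x =>
    tsum_nonneg fun y => mul_nonneg (g.nonneg x y) (sq_nonneg _)
  have hS : Summable S := by
    have hG : Summable (fun p : V × V => g.ω p.2 p.1 * (u p.1) ^ 2) := by
      rw [summable_prod_of_nonneg (fun p => mul_nonneg (g.nonneg _ _) (sq_nonneg _))]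
      constructor
      · intro x
        have : (fun y => g.ω y x * (u x) ^ 2) = fun y => g.ω x y * (u x) ^ 2 := by
          funext y; rw [g.sym y x]
        rw [this]
        exact Stmt17Aux.summable_omega_mul g x _
      · refine (hu2.mul_left C).of_nonneg_of_le
          (fun x => tsum_nonneg fun y => mul_nonneg (g.nonneg _ _) (sq_nonneg _)) ?_
        intro x
        have e : ∑' y, g.ω y x * (u x) ^ 2 = (∑' y, g.ω x y) * (u x) ^ 2 := by
          rw [tsum_mul_right]
          congr 1
          exact tsum_congr fun y => g.sym y x
        rw [e]
        exact mul_le_mul_of_nonneg_right (hω x) (sq_nonneg _)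
    have hF : Summable (fun p : V × V => g.ω p.1 p.2 * (u p.2) ^ 2) := hG.prod_symm
    exact ((summable_prod_of_nonneg
      (fun p => mul_nonneg (g.nonneg _ _) (sq_nonneg _))).mp hF).2
  -- dominating functions
  set Dlap : V → ℝ := fun x => (1 / μmin) * (C * (2 * S x + 2 * C * (u x) ^ 2)) with hDlap
  set Dgrad : V → ℝ := fun x => S x + C * (u x) ^ 2 with hDgrad
  set Dpt : V → ℝ := fun x => g.μ x * (u x) ^ 2 with hDpt
  have hDlapS : Summable Dlap := by
    apply Summable.mul_left
    apply Summable.mul_left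
    exact ((hS.mul_left 2).add ((hu2.mul_left (2 * C))))
  have hDgradS : Summable Dgrad := hS.add (hu2.mul_left C)
  have hDptS : Summable Dpt := hμu2
  -- the key inner bound
  have hQ : ∀ k x, ∑' y, g.ω x y * (v k y - v k x) ^ 2 ≤ 2 * S x + 2 * C * (u x) ^ 2 := by
    intro k x
    have hsum1 : Summable (fun y => g.ω x y * (v k y - v k x) ^ 2) :=
      Stmt17Aux.summable_omega_mul g x _
    have hsum2 : Summable (fun y => g.ω x y * (2 * (u y) ^ 2 + 2 * (u x) ^ 2)) :=
      Stmt17Aux.summable_omega_mul g x _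
    have hle : ∀ y, g.ω x y * (v k y - v k x) ^ 2
        ≤ g.ω x y * (2 * (u y) ^ 2 + 2 * (u x) ^ 2) := by
      intro y
      apply mul_le_mul_of_nonneg_left _ (g.nonneg x y)
      nlinarith [sq_nonneg (v k y + v k x), hvsq k y, hvsq k x]
    calc ∑' y, g.ω x y * (v k y - v k x) ^ 2
        ≤ ∑' y, g.ω x y * (2 * (u y) ^ 2 + 2 * (u x) ^ 2) :=
          Summable.tsum_le_tsum hle hsum1 hsum2
      _ = 2 * S x + (∑' y, g.ω x y) * (2 * (u x) ^ 2) := by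
          have e : (fun y => g.ω x y * (2 * (u y) ^ 2 + 2 * (u x) ^ 2))
              = fun y => 2 * (g.ω x y * (u y) ^ 2) + g.ω x y * (2 * (u x) ^ 2) := by
            funext y; ring
          rw [e, Summable.tsum_add ((Stmt17Aux.summable_omega_mul g x _).mul_left 2)
            ((Stmt17Aux.summable_omega g x).mul_right _), tsum_mul_left, tsum_mul_right]
      _ ≤ 2 * S x + 2 * C * (u x) ^ 2 := by
          have := mul_le_mul_of_nonneg_right (hω x)
            (by positivity : (0:ℝ) ≤ 2 * (u x) ^ 2)
          linarith
  have hQnn : ∀ k x, 0 ≤ ∑' y, g.ω x y * (v k y - v k x) ^ 2 := fun k x =>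
    tsum_nonneg fun y => mul_nonneg (g.nonneg x y) (sq_nonneg _)
  -- bounds
  have hlapb : ∀ k x, g.μ x * (g.lap (v k) x) ^ 2 ≤ Dlap x := by
    intro k x
    have hμx := g.μpos x
    have e : g.μ x * (g.lap (v k) x) ^ 2
        = (∑' y, g.ω x y * (v k y - v k x)) ^ 2 * (1 / g.μ x) := by
      unfold GraphData.lap
      field_simp
    rw [e]
    have h1 : (∑' y, g.ω x y * (v k y - v k x)) ^ 2
        ≤ C * (2 * S x + 2 * C * (u x) ^ 2) := by
      calc (∑' y, g.ω x y * (v k y - v k x)) ^ 2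
          ≤ (∑' y, g.ω x y) * ∑' y, g.ω x y * (v k y - v k x) ^ 2 :=
            Stmt17Aux.cs g x _
        _ ≤ C * (2 * S x + 2 * C * (u x) ^ 2) := by
            apply mul_le_mul (hω x) (hQ k x) (hQnn k x) hC0
    have h2 : (1 / g.μ x) ≤ 1 / μmin := by
      apply one_div_le_one_div_of_le hμmin (hμ x)
    have h3 : (0:ℝ) ≤ 1 / g.μ x := by positivity
    have h4 : (0:ℝ) ≤ C * (2 * S x + 2 * C * (u x) ^ 2) := by
      have := hSnn x
      positivity
    calc (∑' y, g.ω x y * (v k y - v k x)) ^ 2 * (1 / g.μ x)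
        ≤ (C * (2 * S x + 2 * C * (u x) ^ 2)) * (1 / μmin) := by
          apply mul_le_mul h1 h2 h3 h4
      _ = Dlap x := by rw [hDlap]; ring
  have hgradeq : ∀ k x, g.μ x * g.grad (v k) (v k) x
      = (1 / 2) * ∑' y, g.ω x y * (v k y - v k x) ^ 2 := by
    intro k x
    have hμx := (g.μpos x).ne'
    unfold GraphData.grad
    have e : (fun y => g.ω x y * (v k y - v k x) * (v k y - v k x))
        = fun y => g.ω x y * (v k y - v k x) ^ 2 := by funext y; ring
    rw [e, ← mul_assoc]
    congr 1
    field_simp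
  have hgradb : ∀ k x, g.μ x * g.grad (v k) (v k) x ≤ Dgrad x := by
    intro k x
    rw [hgradeq k x, hDgrad]
    have := hQ k x
    linarith
  have hptb : ∀ k x, g.μ x * (v k x) ^ 2 ≤ Dpt x :=
    fun k x => mul_le_mul_of_nonneg_left (hvsq k x) (g.μpos x).le
  -- pointwise vanishing
  have hvanish : ∀ x : V, ∀ k : ℕ, g.G.dist x x₀ + 1 ≤ k →
      v k x = 0 ∧ g.lap (v k) x = 0 ∧ g.grad (v k) (v k) x = 0 := by
    intro x k hk
    have hvx : v k x = 0 := by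
      simp [hv, Stmt17Aux.cutoff_eq_one g x₀ k x (by omega)]
    have hnb : ∀ y, g.ω x y ≠ 0 → v k y = 0 := by
      intro y hy
      have hadj : g.G.Adj x y := lt_of_le_of_ne (g.nonneg x y) (Ne.symm hy)
      have hd1 : g.G.dist y x = 1 := SimpleGraph.dist_eq_one_iff_adj.mpr hadj.symm
      have htri : g.G.dist y x₀ ≤ g.G.dist y x + g.G.dist x x₀ := hconn.dist_triangle
      have : g.G.dist y x₀ ≤ k := by omega
      simp [hv, Stmt17Aux.cutoff_eq_one g x₀ k y this]
    have hterm : ∀ y, g.ω x y * (v k y - v k x) = 0 := by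
      intro y
      by_cases h : g.ω x y = 0
      · rw [h, zero_mul]
      · rw [hnb y h, hvx, sub_zero, mul_zero]
    have hterm2 : ∀ y, g.ω x y * (v k y - v k x) * (v k y - v k x) = 0 := by
      intro y; rw [hterm y, zero_mul]
    refine ⟨hvx, ?_, ?_⟩
    · unfold GraphData.lap
      rw [tsum_congr hterm, tsum_zero, mul_zero]
    · unfold GraphData.grad
      rw [tsum_congr hterm2, tsum_zero, mul_zero]
  -- two applications of dominated convergence
  have main1 : Filter.Tendsto (fun k : ℕ => ∑' x, g.μ x * (g.lap (v k) x) ^ 2)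
      Filter.atTop (nhds 0) := by
    have := tendsto_tsum_of_dominated_convergence (𝓕 := Filter.atTop)
      (f := fun k x => g.μ x * (g.lap (v k) x) ^ 2) (g := fun _ => (0:ℝ))
      (bound := Dlap) hDlapS ?_ ?_
    · simpa using this
    · intro x
      apply Filter.Tendsto.congr' _ tendsto_const_nhds
      filter_upwards [Filter.eventually_ge_atTop (g.G.dist x x₀ + 1)] with k hk
      rw [(hvanish x k hk).2.1]
      ring
    · apply Filter.Eventually.of_forall
      intro k x
      rw [Real.norm_eq_abs, abs_of_nonneg (mul_nonneg (g.μpos x).le (sq_nonneg _))]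
      exact hlapb k x
  have main2 : Filter.Tendsto (fun k : ℕ => ∑' x, g.μ x *
      ((g.lap (v k) x) ^ 2 + g.grad (v k) (v k) x + (v k x) ^ 2))
      Filter.atTop (nhds 0) := by
    have := tendsto_tsum_of_dominated_convergence (𝓕 := Filter.atTop)
      (f := fun k x => g.μ x * ((g.lap (v k) x) ^ 2 + g.grad (v k) (v k) x + (v k x) ^ 2))
      (g := fun _ => (0:ℝ))
      (bound := fun x => Dlap x + Dgrad x + Dpt x)
      ((hDlapS.add hDgradS).add hDptS) ?_ ?_
    · simpa using this
    · intro x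
      apply Filter.Tendsto.congr' _ tendsto_const_nhds
      filter_upwards [Filter.eventually_ge_atTop (g.G.dist x x₀ + 1)] with k hk
      obtain ⟨h1, h2, h3⟩ := hvanish x k hk
      rw [h1, h2, h3]
      ring
    · apply Filter.Eventually.of_forall
      intro k x
      have hnn : 0 ≤ g.μ x * ((g.lap (v k) x) ^ 2 + g.grad (v k) (v k) x + (v k x) ^ 2) := by
        apply mul_nonneg (g.μpos x).le
        have := hgradnn (v k) x
        nlinarith [sq_nonneg (g.lap (v k) x), sq_nonneg (v k x)]
      rw [Real.norm_eq_abs, abs_of_nonneg hnn]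
      have e : g.μ x * ((g.lap (v k) x) ^ 2 + g.grad (v k) (v k) x + (v k x) ^ 2)
          = g.μ x * (g.lap (v k) x) ^ 2 + g.μ x * g.grad (v k) (v k) x
            + g.μ x * (v k x) ^ 2 := by ring
      rw [e]
      have h1' := hlapb k x
      have h2' := hgradb k x
      have h3' := hptb k x
      show _ ≤ Dlap x + Dgrad x + Dpt x
      linarith
  exact ⟨main1, main2⟩
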